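/- Let H be uniformly distributed over F_q^{(n-k)×n}, s ∈ F_q^{n-k} fixed, t > 0, and N_t(C, s) the number of weight-t vectors e with e·Hᵀ = s. Then for any a > 0, the probability that |N_t(C,s) − C(n,t)(q-1)^t/q^{n-k}| ≥ a is at most (q-1)·C(n,t)(q-1)^t / (a²·q^{n-k}). -/

import Mathlib

set_option linter.unusedSectionVars false
set_option linter.unusedVariables false
set_option maxHeartbeats 1000000

open Finset Function Matrix

lemma my_fiber_mul {G H : Type} [AddCommGroup G] [AddCommGroup H] [Fintype G] [Fintype H]
    [DecidableEq H] (f : G →+ H) (hf : Function.Surjective f) (c : H) :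
    (univ.filter fun g => f g = c).card * Fintype.card H = Fintype.card G := by
  have hfib : ∀ d : H, (univ.filter fun g => f g = d).card
      = (univ.filter fun g => f g = 0).card := by
    intro d
    obtain ⟨g₀, hg₀⟩ := hf d
    apply Finset.card_nbij (fun g => g - g₀)
    · intro g hg
      simp only [mem_coe, mem_filter, mem_univ, true_and] at hg ⊢
      simp [map_sub, hg, hg₀]
    · intro g hg g' hg' h
      simpa using congrArg (· + g₀) h
    · intro g hg
      simp only [Set.mem_image, mem_coe, mem_filter, mem_univ, true_and] at hg ⊢
      refine ⟨g + g₀, by simp [map_add, hg, hg₀], by simp⟩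
  have := Finset.card_eq_sum_card_fiberwise
    (f := f) (s := (univ : Finset G)) (t := (univ : Finset H)) (fun x _ => mem_univ _)
  rw [Finset.card_univ] at this
  rw [this, Finset.sum_congr rfl (fun d _ => hfib d), Finset.sum_const, Finset.card_univ,
    hfib c, smul_eq_mul, mul_comm]

variable {F : Type} [Field F] [Fintype F] [DecidableEq F] {n m : ℕ}

lemma my_exists_dot2{x y : Fin n → F} (hx : x ≠ 0) (hxy : ∀ c : F, y ≠ c • x) (u v : F) :
    ∃ r, r ⬝ᵥ x = u ∧ r ⬝ᵥ y = v := by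
  obtain ⟨j, hj⟩ : ∃ j, x j ≠ 0 := by
    by_contra h; push_neg at h; exact hx (funext h)
  set r₀ : Fin n → F := Pi.single j (x j)⁻¹ with hr₀
  have h₀ : r₀ ⬝ᵥ x = 1 := by rw [hr₀, single_dotProduct, inv_mul_cancel₀ hj]
  have hex : ∃ r₁, r₁ ⬝ᵥ x = 0 ∧ r₁ ⬝ᵥ y ≠ 0 := by
    by_contra h; push_neg at h
    refine hxy (r₀ ⬝ᵥ y) (funext fun i => ?_)
    have hzx : (Pi.single i 1 - x i • r₀) ⬝ᵥ x = 0 := by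
      rw [sub_dotProduct, smul_dotProduct, single_dotProduct, h₀, one_mul, smul_eq_mul,
        mul_one, sub_self]
    have := h _ hzx
    rw [sub_dotProduct, smul_dotProduct, single_dotProduct, one_mul, smul_eq_mul,
      sub_eq_zero] at this
    simpa [mul_comm] using this
  obtain ⟨r₁, h₁x, h₁y⟩ := hex
  refine ⟨u • r₀ + ((v - u * (r₀ ⬝ᵥ y)) * (r₁ ⬝ᵥ y)⁻¹) • r₁, ?_, ?_⟩
  · rw [add_dotProduct, smul_dotProduct, smul_dotProduct, h₀, h₁x, smul_eq_mul, smul_eq_mul]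
    ring
  · rw [add_dotProduct, smul_dotProduct, smul_dotProduct, h₁x] at *
    rw [smul_eq_mul, smul_eq_mul]
    field_simp
    ring

/-- dot product as an additive hom -/
def myDotHom (x : Fin n → F) : (Fin n → F) →+ F where
  toFun r := r ⬝ᵥ x
  map_zero' := zero_dotProduct x
  map_add' u v := add_dotProduct u v x

def myDotHom2 (x y : Fin n → F) : (Fin n → F) →+ F × F :=
  (myDotHom x).prod (myDotHom y)

lemma my_row_fiber1 {x : Fin n → F} (hx : x ≠ 0) (c : F) :
    (univ.filter fun r : Fin n → F => r ⬝ᵥ x = c).card * Fintype.card F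
      = Fintype.card F ^ n := by
  have hs : Function.Surjective (myDotHom x) := by
    intro u
    obtain ⟨j, hj⟩ : ∃ j, x j ≠ 0 := by
      by_contra h; push_neg at h; exact hx (funext h)
    exact ⟨Pi.single j (u * (x j)⁻¹), by
      show Pi.single j (u * (x j)⁻¹) ⬝ᵥ x = u
      rw [single_dotProduct]; field_simp⟩
  have := my_fiber_mul (myDotHom x) hs c
  rw [Fintype.card_fun, Fintype.card_fin] at this
  exact this

lemma my_row_fiber2 {x y : Fin n → F} (hx : x ≠ 0) (hxy : ∀ c : F, y ≠ c • x) (c d : F) :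
    (univ.filter fun r : Fin n → F => r ⬝ᵥ x = c ∧ r ⬝ᵥ y = d).card * Fintype.card F ^ 2
      = Fintype.card F ^ n := by
  have hs : Function.Surjective (myDotHom2 x y) := by
    rintro ⟨u, v⟩
    obtain ⟨r, hr1, hr2⟩ := my_exists_dot2 hx hxy u v
    exact ⟨r, by simp [myDotHom2, myDotHom, AddMonoidHom.prod, hr1, hr2]⟩
  have := my_fiber_mul (myDotHom2 x y) hs (c, d)
  simp only [myDotHom2, myDotHom, AddMonoidHom.prod, AddMonoidHom.coe_mk, ZeroHom.coe_mk,
    Fintype.card_prod, Fintype.card_fun, Fintype.card_fin, Prod.mk.injEq] at this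
  rw [← this, sq]
  congr 1
  · congr 1
    apply Finset.filter_congr
    intro r _
    simp [Pi.prod, Prod.ext_iff]

lemma my_card_matrix_filter (P : Fin m → (Fin n → F) → Prop) [∀ i r, Decidable (P i r)]
    [DecidablePred fun H : Matrix (Fin m) (Fin n) F => ∀ i, P i (H i)] :
    (univ.filter fun H : Matrix (Fin m) (Fin n) F => ∀ i, P i (H i)).card
      = ∏ i, (univ.filter fun r => P i r).card := by
  have : (univ.filter fun H : Matrix (Fin m) (Fin n) F => ∀ i, P i (H i))
      = Fintype.piFinset (fun i => univ.filter fun r => P i r) := by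
    ext H
    rw [mem_filter]
    exact ⟨fun h => Fintype.mem_piFinset.mpr (fun i => by simpa using h.2 i),
      fun h => ⟨mem_univ _, fun i => by simpa using Fintype.mem_piFinset.mp h i⟩⟩
  rw [this]; exact Fintype.card_piFinset _

lemma my_card_matrix : Fintype.card (Matrix (Fin m) (Fin n) F) = (Fintype.card F ^ n) ^ m := by
  rw [show (Fintype.card (Matrix (Fin m) (Fin n) F)
      = Fintype.card (Fin m → Fin n → F)) from rfl]
  simp [Fintype.card_fun]

lemma my_card_H1 {x : Fin n → F} (hx : x ≠ 0) (s : Fin m → F) :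
    (univ.filter fun H : Matrix (Fin m) (Fin n) F => H.mulVec x = s).card
        * Fintype.card F ^ m
      = Fintype.card (Matrix (Fin m) (Fin n) F) := by
  have h1 : (univ.filter fun H : Matrix (Fin m) (Fin n) F => H.mulVec x = s)
      = univ.filter fun H => ∀ i, H i ⬝ᵥ x = s i := by
    apply Finset.filter_congr; intro H _
    simp [funext_iff, Matrix.mulVec]
  rw [h1, my_card_matrix_filter (fun i r => r ⬝ᵥ x = s i), my_card_matrix]
  calc (∏ i, (univ.filter fun r => r ⬝ᵥ x = s i).card) * Fintype.card F ^ m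
      = ∏ i, ((univ.filter fun r => r ⬝ᵥ x = s i).card * Fintype.card F) := by
        rw [Finset.prod_mul_distrib, Finset.prod_const]; simp
    _ = ∏ _i : Fin m, Fintype.card F ^ n :=
        Finset.prod_congr rfl fun i _ => my_row_fiber1 hx (s i)
    _ = (Fintype.card F ^ n) ^ m := by simp

lemma my_card_H2 {x y : Fin n → F} (hx : x ≠ 0) (hxy : ∀ c : F, y ≠ c • x) (s : Fin m → F) :
    (univ.filter fun H : Matrix (Fin m) (Fin n) F => H.mulVec x = s ∧ H.mulVec y = s).card
        * (Fintype.card F ^ m) ^ 2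
      = Fintype.card (Matrix (Fin m) (Fin n) F) := by
  have h1 : (univ.filter fun H : Matrix (Fin m) (Fin n) F => H.mulVec x = s ∧ H.mulVec y = s)
      = univ.filter fun H => ∀ i, (H i ⬝ᵥ x = s i ∧ H i ⬝ᵥ y = s i) := by
    apply Finset.filter_congr; intro H _
    constructor
    · rintro ⟨h1, h2⟩ i
      exact ⟨congrFun h1 i, congrFun h2 i⟩
    · intro h
      exact ⟨funext fun i => (h i).1, funext fun i => (h i).2⟩
  rw [h1, my_card_matrix_filter (fun i r => r ⬝ᵥ x = s i ∧ r ⬝ᵥ y = s i), my_card_matrix,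
    show ((Fintype.card F ^ m) ^ 2 = (Fintype.card F ^ 2) ^ m) by ring]
  calc (∏ i, (univ.filter fun r => r ⬝ᵥ x = s i ∧ r ⬝ᵥ y = s i).card) * (Fintype.card F ^ 2) ^ m
      = ∏ i, ((univ.filter fun r => r ⬝ᵥ x = s i ∧ r ⬝ᵥ y = s i).card * Fintype.card F ^ 2) := by
        rw [Finset.prod_mul_distrib, Finset.prod_const]; simp
    _ = ∏ _i : Fin m, Fintype.card F ^ n :=
        Finset.prod_congr rfl fun i _ => my_row_fiber2 hx hxy (s i) (s i)
    _ = (Fintype.card F ^ n) ^ m := by simp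

lemma my_card_support (S : Finset (Fin n)) :
    (univ.filter fun e : Fin n → F => univ.filter (fun i => e i ≠ 0) = S).card
      = (Fintype.card F - 1) ^ S.card := by
  have h : (univ.filter fun e : Fin n → F => univ.filter (fun i => e i ≠ 0) = S)
      = Fintype.piFinset (fun i => if i ∈ S then ({0}ᶜ : Finset F) else {0}) := by
    ext e
    rw [mem_filter, Fintype.mem_piFinset]
    simp only [mem_univ, true_and]
    constructor
    · intro h i
      by_cases hi : i ∈ S
      · simp only [hi, if_true, mem_compl, mem_singleton]
        rw [← h] at hi; simpa using hi
      · simp only [hi, if_false, mem_singleton]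
        by_contra hne
        exact hi (h ▸ (by simpa using hne : i ∈ univ.filter fun i => e i ≠ 0))
    · intro h
      ext i
      simp only [mem_filter, mem_univ, true_and]
      constructor
      · intro hne
        by_contra hi
        have := h i; rw [if_neg hi, mem_singleton] at this; exact hne this
      · intro hi
        have := h i; rw [if_pos hi] at this; simpa using this
  rw [h, Fintype.card_piFinset]
  have : ∀ i, (if i ∈ S then ({0}ᶜ : Finset F) else {0}).card
      = if i ∈ S then Fintype.card F - 1 else 1 := by
    intro i; split <;> simp [Finset.card_compl]
  rw [Finset.prod_congr rfl (fun i _ => this i), Finset.prod_ite_mem, Finset.univ_inter,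
    Finset.prod_const]

lemma my_card_weight (t : ℕ) :
    (univ.filter fun e : Fin n → F => hammingNorm e = t).card
      = n.choose t * (Fintype.card F - 1) ^ t := by
  rw [Finset.card_eq_sum_card_fiberwise
    (f := fun e : Fin n → F => univ.filter (fun i => e i ≠ 0))
    (t := Finset.powersetCard t univ)
    (fun e he => by
      rw [mem_coe, Finset.mem_powersetCard]
      exact ⟨Finset.subset_univ _, (mem_filter.mp (mem_coe.mp he)).2⟩)]
  have key : ∀ S ∈ Finset.powersetCard t (univ : Finset (Fin n)),
      ((univ.filter fun e : Fin n → F => hammingNorm e = t).filter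
        (fun e => univ.filter (fun i => e i ≠ 0) = S)).card
      = (Fintype.card F - 1) ^ t := by
    intro S hS
    obtain ⟨-, hcard⟩ := Finset.mem_powersetCard.mp hS
    rw [Finset.filter_filter]
    have : ((univ.filter fun e : Fin n → F =>
        hammingNorm e = t ∧ univ.filter (fun i => e i ≠ 0) = S))
        = (univ.filter fun e : Fin n → F => univ.filter (fun i => e i ≠ 0) = S) := by
      apply Finset.filter_congr
      intro e _
      constructor
      · exact fun h => h.2
      · intro h
        refine ⟨?_, h⟩
        rw [hammingNorm, show ({i | e i ≠ 0} : Finset (Fin n)) = univ.filter (fun i => e i ≠ 0) from rfl, h, hcard]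
    rw [this, my_card_support, hcard]
  rw [Finset.sum_congr rfl key, Finset.sum_const, Finset.card_powersetCard, Finset.card_univ,
    Fintype.card_fin, smul_eq_mul]

/-- Second moment bound: the probability (over uniform `H`) that the number of weight-`t`
solutions of `H·eᵀ = s` deviates from its mean `C(n,t)(q-1)^t/q^{n-k}` by at least `a`
is at most `(q-1)·C(n,t)(q-1)^t / (a²·q^{n-k})`. -/
theorem stmt_11 (F : Type) [Field F] [Fintype F] [DecidableEq F] (n k t : ℕ)
    (hkn : k ≤ n) (ht : 0 < t) (s : Fin (n - k) → F) (a : ℝ) (ha : 0 < a) :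
    ((univ.filter (fun H : Matrix (Fin (n - k)) (Fin n) F =>
        a ≤ |((univ.filter (fun e : Fin n → F =>
            hammingNorm e = t ∧ H.mulVec e = s)).card : ℝ)
          - (n.choose t : ℝ) * ((Fintype.card F : ℝ) - 1) ^ t
              / (Fintype.card F : ℝ) ^ (n - k)|)).card : ℝ)
      / (Fintype.card (Matrix (Fin (n - k)) (Fin n) F) : ℝ)
    ≤ ((Fintype.card F : ℝ) - 1) * ((n.choose t : ℝ) * ((Fintype.card F : ℝ) - 1) ^ t)
        / (a ^ 2 * (Fintype.card F : ℝ) ^ (n - k)) := by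
  classical
  set q : ℕ := Fintype.card F with hq
  have hq1 : 1 ≤ q := Fintype.card_pos
  set W : Finset (Fin n → F) := univ.filter (fun e => hammingNorm e = t) with hWdef
  set A : ℕ := Fintype.card (Matrix (Fin (n - k)) (Fin n) F) with hA
  have hA0 : (0:ℝ) < (A:ℝ) := by exact_mod_cast Fintype.card_pos
  set Q : ℝ := (q:ℝ) ^ (n - k) with hQdef
  have hQ0 : (0:ℝ) < Q := by
    have : 0 < q := hq1
    positivity
  set N : Matrix (Fin (n - k)) (Fin n) F → ℕ := fun H => (univ.filter (fun e : Fin n → F =>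
      hammingNorm e = t ∧ H.mulVec e = s)).card with hN
  -- basic facts
  have hWne : ∀ e ∈ W, e ≠ (0 : Fin n → F) := by
    intro e he
    have := (mem_filter.mp he).2
    intro h0
    rw [h0, hammingNorm_zero] at this
    omega
  have hwcast : (W.card : ℝ) = (n.choose t : ℝ) * ((q:ℝ) - 1) ^ t := by
    rw [hWdef, my_card_weight t, ← hq]
    push_cast [Nat.cast_sub hq1]
    ring
  set w : ℝ := (W.card : ℝ) with hwdef
  have hw0 : 0 ≤ w := Nat.cast_nonneg _
  set μ : ℝ := w / Q with hμ
  -- N as a sum over W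
  have hNsum : ∀ H, N H = ∑ e ∈ W, if H.mulVec e = s then 1 else 0 := by
    intro H
    show (univ.filter (fun e : Fin n → F => hammingNorm e = t ∧ H.mulVec e = s)).card = _
    rw [← Finset.filter_filter, ← hWdef, Finset.card_filter]
  -- first moment
  have hS1 : ∑ H, (N H : ℝ) = w * (A:ℝ) / Q := by
    have hnat : (∑ H, N H) * q ^ (n - k) = W.card * A := by
      have hswap : (∑ H, N H) = ∑ e ∈ W,
          (univ.filter (fun H : Matrix (Fin (n-k)) (Fin n) F => H.mulVec e = s)).card := by
        simp_rw [hNsum]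
        rw [Finset.sum_comm]
        exact Finset.sum_congr rfl fun e _ => (Finset.card_filter _ _).symm
      rw [hswap, Finset.sum_mul,
        Finset.sum_congr rfl (fun e he => my_card_H1 (hWne e he) s),
        Finset.sum_const, smul_eq_mul]
    rw [eq_div_iff (ne_of_gt hQ0), hwdef, hQdef]
    exact_mod_cast hnat
  -- second moment
  have hAQ2 : ∀ x ∈ W, ∀ y ∈ W, (¬ ∃ c : F, y = c • x) →
      ((univ.filter fun H : Matrix (Fin (n-k)) (Fin n) F =>
        H.mulVec x = s ∧ H.mulVec y = s).card : ℝ) = (A:ℝ) / Q^2 := by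
    intro x hx y _ hnc
    push_neg at hnc
    have hcard := my_card_H2 (hWne x hx) hnc s
    rw [eq_div_iff (by positivity), hQdef]
    exact_mod_cast hcard
  have hS2 : ∑ H, (N H : ℝ)^2
      ≤ w * (((q:ℝ) - 1) * ((A:ℝ) / Q) + w * ((A:ℝ) / Q^2)) := by
    have hpair : ∀ H, (N H : ℝ)^2 = ∑ x ∈ W, ∑ y ∈ W,
        (if H.mulVec x = s ∧ H.mulVec y = s then (1:ℝ) else 0) := by
      intro H
      have hcast : (N H : ℝ) = ∑ e ∈ W, (if H.mulVec e = s then (1:ℝ) else 0) := by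
        rw [hNsum H]
        push_cast
        rfl
      rw [hcast, sq, Finset.sum_mul_sum]
      refine Finset.sum_congr rfl fun x _ => Finset.sum_congr rfl fun y _ => ?_
      by_cases h1 : H.mulVec x = s <;> by_cases h2 : H.mulVec y = s <;> simp [h1, h2]
    have hswap2 : ∑ H, (N H:ℝ)^2 = ∑ x ∈ W, ∑ y ∈ W,
        ((univ.filter fun H : Matrix (Fin (n-k)) (Fin n) F =>
          H.mulVec x = s ∧ H.mulVec y = s).card : ℝ) := by
      simp_rw [hpair]
      rw [Finset.sum_comm]
      refine Finset.sum_congr rfl fun x _ => ?_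
      rw [Finset.sum_comm]
      refine Finset.sum_congr rfl fun y _ => ?_
      rw [Finset.card_filter]
      push_cast
      rfl
    rw [hswap2]
    have hxbnd : ∀ x ∈ W, ∑ y ∈ W,
        ((univ.filter fun H : Matrix (Fin (n-k)) (Fin n) F =>
          H.mulVec x = s ∧ H.mulVec y = s).card : ℝ)
        ≤ ((q:ℝ)-1) * ((A:ℝ)/Q) + w * ((A:ℝ)/Q^2) := by
      intro x hx
      rw [← Finset.sum_filter_add_sum_filter_not W (fun y => ∃ c : F, y = c • x)]
      have hb1 : ∑ y ∈ W.filter (fun y => ∃ c : F, y = c • x),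
          ((univ.filter fun H : Matrix (Fin (n-k)) (Fin n) F =>
            H.mulVec x = s ∧ H.mulVec y = s).card : ℝ)
          ≤ ((q:ℝ)-1) * ((A:ℝ)/Q) := by
        have hterm : ∀ y ∈ W.filter (fun y => ∃ c : F, y = c • x),
            ((univ.filter fun H : Matrix (Fin (n-k)) (Fin n) F =>
              H.mulVec x = s ∧ H.mulVec y = s).card : ℝ) ≤ (A:ℝ)/Q := by
          intro y _
          have hsub : (univ.filter fun H : Matrix (Fin (n-k)) (Fin n) F =>
              H.mulVec x = s ∧ H.mulVec y = s)
              ⊆ (univ.filter fun H : Matrix (Fin (n-k)) (Fin n) F => H.mulVec x = s) :=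
            by intro H hH; simp only [mem_filter, mem_univ, true_and] at hH ⊢; exact hH.1
          have hcard := my_card_H1 (hWne x hx) s
          calc ((univ.filter fun H : Matrix (Fin (n-k)) (Fin n) F =>
                H.mulVec x = s ∧ H.mulVec y = s).card : ℝ)
              ≤ ((univ.filter fun H : Matrix (Fin (n-k)) (Fin n) F =>
                H.mulVec x = s).card : ℝ) := by exact_mod_cast Finset.card_le_card hsub
            _ = (A:ℝ)/Q := by
                rw [eq_div_iff (ne_of_gt hQ0), hQdef]
                exact_mod_cast hcard
        have hcardcol : ((W.filter (fun y => ∃ c : F, y = c • x)).card : ℝ) ≤ (q:ℝ) - 1 := by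
          have hsub2 : W.filter (fun y => ∃ c : F, y = c • x)
              ⊆ ((univ : Finset F).erase 0).image (fun c => c • x) := by
            intro y hy
            obtain ⟨hyW, c, rfl⟩ := Finset.mem_filter.mp hy
            have hc0 : c ≠ 0 := by
              rintro rfl
              exact hWne _ hyW (zero_smul F x)
            exact Finset.mem_image.mpr ⟨c, Finset.mem_erase.mpr ⟨hc0, mem_univ c⟩, rfl⟩
          have h1 : (W.filter (fun y => ∃ c : F, y = c • x)).card ≤ q - 1 := by
            calc (W.filter (fun y => ∃ c : F, y = c • x)).card
                ≤ (((univ : Finset F).erase 0).image (fun c => c • x)).card :=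
                  Finset.card_le_card hsub2
              _ ≤ ((univ : Finset F).erase 0).card := Finset.card_image_le
              _ = q - 1 := by rw [Finset.card_erase_of_mem (mem_univ 0), Finset.card_univ]
          calc ((W.filter (fun y => ∃ c : F, y = c • x)).card : ℝ)
              ≤ ((q - 1 : ℕ) : ℝ) := by exact_mod_cast h1
            _ = (q:ℝ) - 1 := by push_cast [Nat.cast_sub hq1]; ring
        calc ∑ y ∈ W.filter (fun y => ∃ c : F, y = c • x),
            ((univ.filter fun H : Matrix (Fin (n-k)) (Fin n) F =>
              H.mulVec x = s ∧ H.mulVec y = s).card : ℝ)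
            ≤ ∑ _y ∈ W.filter (fun y => ∃ c : F, y = c • x), (A:ℝ)/Q :=
              Finset.sum_le_sum hterm
          _ = ((W.filter (fun y => ∃ c : F, y = c • x)).card : ℝ) * ((A:ℝ)/Q) := by
              rw [Finset.sum_const, nsmul_eq_mul]
          _ ≤ ((q:ℝ)-1) * ((A:ℝ)/Q) := by
              apply mul_le_mul_of_nonneg_right hcardcol
              positivity
      have hb2 : ∑ y ∈ W.filter (fun y => ¬ ∃ c : F, y = c • x),
          ((univ.filter fun H : Matrix (Fin (n-k)) (Fin n) F =>
            H.mulVec x = s ∧ H.mulVec y = s).card : ℝ)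
          ≤ w * ((A:ℝ)/Q^2) := by
        have heq : ∀ y ∈ W.filter (fun y => ¬ ∃ c : F, y = c • x),
            ((univ.filter fun H : Matrix (Fin (n-k)) (Fin n) F =>
              H.mulVec x = s ∧ H.mulVec y = s).card : ℝ) = (A:ℝ)/Q^2 := by
          intro y hy
          obtain ⟨hyW, hnc⟩ := Finset.mem_filter.mp hy
          exact hAQ2 x hx y hyW hnc
        rw [Finset.sum_congr rfl heq, Finset.sum_const, nsmul_eq_mul]
        apply mul_le_mul_of_nonneg_right _ (by positivity)
        rw [hwdef]
        exact_mod_cast Finset.card_filter_le _ _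
      linarith
    calc ∑ x ∈ W, ∑ y ∈ W,
        ((univ.filter fun H : Matrix (Fin (n-k)) (Fin n) F =>
          H.mulVec x = s ∧ H.mulVec y = s).card : ℝ)
        ≤ ∑ _x ∈ W, (((q:ℝ)-1) * ((A:ℝ)/Q) + w * ((A:ℝ)/Q^2)) :=
          Finset.sum_le_sum hxbnd
      _ = w * (((q:ℝ) - 1) * ((A:ℝ) / Q) + w * ((A:ℝ) / Q^2)) := by
          rw [Finset.sum_const, nsmul_eq_mul, hwdef]
  -- variance
  have hvar : ∑ H, ((N H : ℝ) - μ)^2 ≤ ((q:ℝ) - 1) * w * (A:ℝ) / Q := by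
    have expand : ∑ H, ((N H : ℝ) - μ)^2
        = (∑ H, (N H : ℝ)^2) - 2*μ*(∑ H, (N H : ℝ)) + μ^2 * (A:ℝ) := by
      have hpt : ∀ H, ((N H : ℝ) - μ)^2 = (N H : ℝ)^2 - (2*μ)*(N H : ℝ) + μ^2 :=
        fun H => by ring
      rw [Finset.sum_congr rfl (fun H _ => hpt H), Finset.sum_add_distrib,
        Finset.sum_sub_distrib, Finset.sum_const, Finset.card_univ, ← Finset.mul_sum,
        ← hA, nsmul_eq_mul]
      ring
    rw [expand, hS1, hμ]
    have hid : w * (((q:ℝ) - 1) * ((A:ℝ) / Q) + w * ((A:ℝ) / Q^2))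
        - 2*(w/Q)*(w*(A:ℝ)/Q) + (w/Q)^2*(A:ℝ) = ((q:ℝ) - 1) * w * (A:ℝ) / Q := by
      field_simp
      ring
    linarith [hS2]
  -- Chebyshev
  set D := univ.filter (fun H : Matrix (Fin (n - k)) (Fin n) F =>
      a ≤ |((univ.filter (fun e : Fin n → F =>
          hammingNorm e = t ∧ H.mulVec e = s)).card : ℝ)
        - (n.choose t : ℝ) * ((q:ℝ) - 1) ^ t / Q|) with hD
  have hμexpr : (n.choose t : ℝ) * ((q:ℝ) - 1) ^ t / Q = μ := by
    rw [hμ, hwcast]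
  have hcheb : a^2 * (D.card : ℝ) ≤ ∑ H, ((N H : ℝ) - μ)^2 := by
    calc a^2 * (D.card : ℝ) = ∑ _H ∈ D, a^2 := by rw [Finset.sum_const, nsmul_eq_mul]; ring
      _ ≤ ∑ H ∈ D, ((N H : ℝ) - μ)^2 := by
          apply Finset.sum_le_sum
          intro H hH
          have hval := (mem_filter.mp hH).2
          rw [hμexpr] at hval
          calc a^2 ≤ |(N H : ℝ) - μ|^2 := by
                apply pow_le_pow_left₀ ha.le
                exact hval
            _ = ((N H : ℝ) - μ)^2 := sq_abs _
      _ ≤ ∑ H, ((N H : ℝ) - μ)^2 := by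
          apply Finset.sum_le_sum_of_subset_of_nonneg (Finset.subset_univ _)
          intro H _ _
          positivity
  -- conclude
  have key : a^2 * (D.card : ℝ) ≤ ((q:ℝ) - 1) * w * (A:ℝ) / Q := le_trans hcheb hvar
  rw [div_le_div_iff₀ hA0 (by positivity)]
  rw [hwcast] at key
  have key2 := mul_le_mul_of_nonneg_right key hQ0.le
  rw [div_mul_cancel₀ _ (ne_of_gt hQ0)] at key2
  nlinarith [key2]
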